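/- arXiv:1507.05307 — 3 statements merged into one kernel-verified Lean document; each statement's English description precedes it below -/
import Mathlib

section
/- Let H be a concept class over X with VCdim(H) ≤ 1, f ∈ H, and suppose for every x ∈ X there exists h ∈ H with h(x) ≠ f(x), and for all distinct x, y there is h ∈ H with h(x) ≠ h(y). Define x ≤ y iff for all h ∈ H, h(y) ≠ f(y) implies h(x) ≠ f(x). Then ≤ is a tree ordering: for every x, the set {y : y ≤ x} is linearly ordered by ≤. -/
/-- `H` (a class of boolean functions) shatters `A` if every labeling of `A` is realized. -/
def FnShatters {X : Type*} (H : Set (X → Bool)) (A : Set X) : Prop :=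
  ∀ g : X → Bool, ∃ h ∈ H, ∀ a ∈ A, h a = g a

lemma bool_aux : ∀ a b c : Bool, a ≠ c → b ≠ c → a = b := by decide

/-- If `VCdim H ≤ 1`, `f ∈ H`, no point is labeled constantly by `H` relative to `f`,
and `H` separates points, then the order `x ≤ y ↔ ∀ h ∈ H, h y ≠ f y → h x ≠ f x`
is a tree ordering: every initial segment `{y : y ≤ x}` is linearly ordered. -/
theorem stmt_3 {X : Type*} (H : Set (X → Bool)) (f : X → Bool) (hf : f ∈ H)
    (hvc : ∀ x y : X, x ≠ y → ¬ FnShatters H {x, y})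
    (hnc : ∀ x : X, ∃ h ∈ H, h x ≠ f x)
    (hsep : ∀ x y : X, x ≠ y → ∃ h ∈ H, h x ≠ h y)
    (le : X → X → Prop)
    (hle : ∀ x y, le x y ↔ ∀ h ∈ H, h y ≠ f y → h x ≠ f x) :
    ∀ x y z : X, le y x → le z x → le y z ∨ le z y := by
  intro x y z hyx hzx
  by_contra hcon
  push_neg at hcon
  obtain ⟨hnyz, hnzy⟩ := hcon
  rw [hle] at hnyz hnzy
  push_neg at hnyz hnzy
  obtain ⟨h₁, h₁H, h₁z, h₁y⟩ := hnyz  -- h₁ z ≠ f z, h₁ y = f y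
  obtain ⟨h₂, h₂H, h₂y, h₂z⟩ := hnzy  -- h₂ y ≠ f y, h₂ z = f z
  have hne : y ≠ z := by
    rintro rfl
    exact h₁z h₁y
  obtain ⟨h₃, h₃H, h₃x⟩ := hnc x
  have h₃y : h₃ y ≠ f y := (hle y x).mp hyx h₃ h₃H h₃x
  have h₃z : h₃ z ≠ f z := (hle z x).mp hzx h₃ h₃H h₃x
  apply hvc y z hne
  intro g
  by_cases gy : g y = f y <;> by_cases gz : g z = f z
  · exact ⟨f, hf, by rintro a (rfl | rfl) <;> simp [gy.symm, gz.symm]⟩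
  · refine ⟨h₁, h₁H, ?_⟩
    rintro a (rfl | rfl)
    · rw [h₁y, gy]
    · exact bool_aux _ _ _ h₁z gz
  · refine ⟨h₂, h₂H, ?_⟩
    rintro a (rfl | rfl)
    · exact bool_aux _ _ _ h₂y gy
    · rw [h₂z, gz]
  · refine ⟨h₃, h₃H, ?_⟩
    rintro a (rfl | rfl)
    · exact bool_aux _ _ _ h₃y gy
    · exact bool_aux _ _ _ h₃z gz
end

section
/- If H has VC dimension at most 1 and every h ∈ H is an initial segment with respect to a tree ordering obtained as in the structure theorem, then H admits an unlabeled sample compression scheme of size 1: there exist functions F mapping each H-realizable labeled sample to at most one unlabeled point of the sample, and G mapping such compressed outputs to hypotheses, such that G(F(S)) correctly labels every example of S. -/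
/-- The canonical preorder: `x` is below `y` iff every hypothesis disagreeing
with `f` at `y` also disagrees with `f` at `x`. -/
private def Myle {X : Type*} (H : Set (X → Bool)) (f : X → Bool) (x y : X) : Prop :=
  ∀ h ∈ H, h y ≠ f y → h x ≠ f x

private lemma myle_trans {X : Type*} (H : Set (X → Bool)) (f : X → Bool) :
    ∀ a b c : X, Myle H f a b → Myle H f b c → Myle H f a c :=
  fun _ _ _ hab hbc h hH hc => hab h hH (hbc h hH hc)

private lemma bool_eq_of_ne {u v w : Bool} (h1 : u ≠ w) (h2 : v ≠ w) : u = v := by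
  cases u <;> cases v <;> cases w <;> simp_all

private lemma bool_eq_not_of_ne {u v : Bool} (h1 : u ≠ v) : u = !v := by
  cases u <;> cases v <;> simp_all

/-- Any two points at which a single hypothesis disagrees with `f` are
`Myle`-comparable, by VC dimension at most 1. -/
private lemma myle_total {X : Type*} {H : Set (X → Bool)} {f : X → Bool} (hf : f ∈ H)
    (hvc : ∀ x y : X, x ≠ y → ¬ FnShatters H {x, y})
    {h : X → Bool} (hH : h ∈ H) {a b : X} (ha : h a ≠ f a) (hb : h b ≠ f b) :
    Myle H f a b ∨ Myle H f b a := by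
  classical
  by_cases hab : a = b
  · subst hab; exact Or.inl (fun h' hH' hd => hd)
  by_contra hc
  push_neg at hc
  obtain ⟨h1, h2⟩ := hc
  simp only [Myle, not_forall] at h1 h2
  obtain ⟨g1, hg1H, hg1b, hg1a⟩ := h1
  obtain ⟨g2, hg2H, hg2a, hg2b⟩ := h2
  push_neg at hg1a hg2b
  refine hvc a b hab ?_
  intro g
  by_cases hga : g a = f a <;> by_cases hgb : g b = f b
  · refine ⟨f, hf, ?_⟩
    intro z hz
    simp only [Set.mem_insert_iff, Set.mem_singleton_iff] at hz
    rcases hz with rfl | rfl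
    · exact hga.symm
    · exact hgb.symm
  · refine ⟨g1, hg1H, ?_⟩
    intro z hz
    simp only [Set.mem_insert_iff, Set.mem_singleton_iff] at hz
    rcases hz with rfl | rfl
    · rw [hg1a, hga]
    · exact bool_eq_of_ne hg1b hgb
  · refine ⟨g2, hg2H, ?_⟩
    intro z hz
    simp only [Set.mem_insert_iff, Set.mem_singleton_iff] at hz
    rcases hz with rfl | rfl
    · exact bool_eq_of_ne hg2a hga
    · rw [hg2b, hgb]
  · refine ⟨h, hH, ?_⟩
    intro z hz
    simp only [Set.mem_insert_iff, Set.mem_singleton_iff] at hz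
    rcases hz with rfl | rfl
    · exact bool_eq_of_ne ha hga
    · exact bool_eq_of_ne hb hgb

/-- A finite nonempty set on which a transitive relation is total has a greatest element. -/
private lemma exists_top {X : Type*} (le : X → X → Prop)
    (htrans : ∀ a b c : X, le a b → le b c → le a c) :
    ∀ D : Finset X, D.Nonempty → (∀ a ∈ D, ∀ b ∈ D, le a b ∨ le b a) →
      ∃ x ∈ D, ∀ d ∈ D, le d x := by
  classical
  intro D
  induction D using Finset.induction with
  | empty => intro hne _; simp at hne
  | @insert a s ha ih =>
    intro _ tot
    by_cases hs : s.Nonempty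
    · obtain ⟨m, hm, hmax⟩ := ih hs (fun x hx y hy =>
        tot x (Finset.mem_insert_of_mem hx) y (Finset.mem_insert_of_mem hy))
      rcases tot a (Finset.mem_insert_self a s) m (Finset.mem_insert_of_mem hm) with h1 | h1
      · refine ⟨m, Finset.mem_insert_of_mem hm, ?_⟩
        intro d hd
        rcases Finset.mem_insert.1 hd with rfl | hd
        · exact h1
        · exact hmax d hd
      · refine ⟨a, Finset.mem_insert_self a s, ?_⟩
        intro d hd
        rcases Finset.mem_insert.1 hd with rfl | hd
        · rcases tot d (Finset.mem_insert_self d s) d (Finset.mem_insert_self d s) with h | h <;>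
            exact h
        · exact htrans d m a (hmax d hd) h1
    · have hse : s = ∅ := Finset.not_nonempty_iff_eq_empty.1 hs
      subst hse
      refine ⟨a, Finset.mem_insert_self a ∅, ?_⟩
      intro d hd
      simp only [Finset.mem_insert, Finset.notMem_empty, or_false] at hd
      subst hd
      rcases tot d (Finset.mem_insert_self d ∅) d (Finset.mem_insert_self d ∅) with h | h <;>
        exact h

/-- Every class of VC dimension at most 1, structured as in the structure theorem
(with `f ∈ H` and a tree ordering for which every `f`-representation of a member of `H`
is an initial segment), admits an unlabeled sample compression scheme of size 1:
`F` maps each `H`-realizable labeled sample to at most one unlabeled point occurring in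
the sample, and `G` reconstructs a hypothesis that labels every example of the sample
correctly. -/
theorem stmt_7 {X : Type*} (H : Set (X → Bool)) (f : X → Bool) (hf : f ∈ H)
    (hvc : ∀ x y : X, x ≠ y → ¬ FnShatters H {x, y})
    (r : X → X → Prop) (hpo : IsPartialOrder X r)
    (htree : ∀ x y z : X, r y x → r z x → r y z ∨ r z y)
    (hseg : ∀ h ∈ H, ∀ x y : X, r x y → h y ≠ f y → h x ≠ f x) :
    ∃ (F : List (X × Bool) → Finset X) (G : Finset X → X → Bool),
      ∀ S : List (X × Bool), (∃ h ∈ H, ∀ p ∈ S, h p.1 = p.2) →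
        (F S).card ≤ 1 ∧
        (∀ x ∈ F S, ∃ y, (x, y) ∈ S) ∧
        (∀ p ∈ S, G (F S) p.1 = p.2) := by
  classical
  -- the disagreement set of a hypothesis on the sample points
  let Dis : (X → Bool) → List (X × Bool) → Finset X := fun h S =>
    (S.map Prod.fst).toFinset.filter (fun x => h x ≠ f x)
  refine ⟨fun S =>
    if hS : ∃ h ∈ H, ∀ p ∈ S, h p.1 = p.2 then
      if hD : (Dis hS.choose S).Nonempty then
        {(exists_top (Myle H f) (myle_trans H f) (Dis hS.choose S) hD
          (fun a haD b hbD =>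
            myle_total hf hvc hS.choose_spec.1
              (Finset.mem_filter.1 haD).2 (Finset.mem_filter.1 hbD).2)).choose}
      else ∅
    else ∅,
    fun s x => if ∃ z ∈ s, Myle H f x z then !f x else f x,
    ?_⟩
  intro S hS
  beta_reduce
  rw [dif_pos hS]
  obtain ⟨hh0H, hh0⟩ := hS.choose_spec
  set h0 := hS.choose with hh0def
  by_cases hD : (Dis h0 S).Nonempty
  · rw [dif_pos hD]
    obtain ⟨hxD, hxmax⟩ := (exists_top (Myle H f) (myle_trans H f) (Dis h0 S) hD
      (fun a haD b hbD =>
        myle_total hf hvc hS.choose_spec.1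
          (Finset.mem_filter.1 haD).2 (Finset.mem_filter.1 hbD).2)).choose_spec
    set x := (exists_top (Myle H f) (myle_trans H f) (Dis h0 S) hD
      (fun a haD b hbD =>
        myle_total hf hvc hS.choose_spec.1
          (Finset.mem_filter.1 haD).2 (Finset.mem_filter.1 hbD).2)).choose with hxdef
    have hx_disag : h0 x ≠ f x := (Finset.mem_filter.1 hxD).2
    refine ⟨by simp, ?_, ?_⟩
    · intro z hz
      simp only [Finset.mem_singleton] at hz
      subst hz
      have := (Finset.mem_filter.1 hxD).1
      rw [List.mem_toFinset, List.mem_map] at this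
      obtain ⟨p, hpS, hp1⟩ := this
      exact ⟨p.2, by rw [← hp1]; simpa using hpS⟩
    · intro p hp
      by_cases hmy : Myle H f p.1 x
      · have hcond : ∃ z ∈ ({x} : Finset X), Myle H f p.1 z := ⟨x, Finset.mem_singleton_self x, hmy⟩
        rw [if_pos hcond]
        have hdis : h0 p.1 ≠ f p.1 := hmy h0 hh0H hx_disag
        have := hh0 p hp
        rw [← this]
        exact (bool_eq_not_of_ne hdis).symm
      · have hcond : ¬ ∃ z ∈ ({x} : Finset X), Myle H f p.1 z := by
          rintro ⟨z, hz, hzle⟩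
          simp only [Finset.mem_singleton] at hz
          subst hz
          exact hmy hzle
        rw [if_neg hcond]
        have hmem : p.1 ∈ (S.map Prod.fst).toFinset := by
          rw [List.mem_toFinset, List.mem_map]
          exact ⟨p, hp, rfl⟩
        have hagree : h0 p.1 = f p.1 := by
          by_contra hne
          exact hmy (hxmax p.1 (Finset.mem_filter.2 ⟨hmem, hne⟩))
        rw [← hagree]
        exact hh0 p hp
  · rw [dif_neg hD]
    refine ⟨by simp, by simp, ?_⟩
    intro p hp
    have hcond : ¬ ∃ z ∈ (∅ : Finset X), Myle H f p.1 z := by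
      rintro ⟨z, hz, -⟩
      exact absurd hz (Finset.notMem_empty z)
    rw [if_neg hcond]
    have hmem : p.1 ∈ (S.map Prod.fst).toFinset := by
      rw [List.mem_toFinset, List.mem_map]
      exact ⟨p, hp, rfl⟩
    have hagree : h0 p.1 = f p.1 := by
      by_contra hne
      exact hD ⟨p.1, Finset.mem_filter.2 ⟨hmem, hne⟩⟩
    rw [← hagree]
    exact hh0 p hp
end

section
/- Let H be a concept class over X with VCdim(H) ≤ 1 and suppose distinct points of X are separated by H and no point is labeled constantly by H. For any x₁, x₂ ∈ X, if there exists h ∈ H with x₁, x₂ ∈ h_f (i.e., h disagrees with f ∈ H at both points), then x₁ and x₂ are comparable in the order ≤ defined by x ≤ y iff every h ∈ H disagreeing with f at y also disagrees with f at x. -/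
/-- If `VCdim H ≤ 1`, `H` separates points and no point is labeled constantly, then any
two points at which some `h ∈ H` simultaneously disagrees with `f` are comparable in
the order `x ≤ y ↔ ∀ h ∈ H, h y ≠ f y → h x ≠ f x`. -/
theorem stmt_16 {X : Type*} (H : Set (X → Bool)) (f : X → Bool) (hf : f ∈ H)
    (hvc : ∀ x y : X, x ≠ y → ¬ FnShatters H {x, y})
    (hsep : ∀ x y : X, x ≠ y → ∃ h ∈ H, h x ≠ h y)
    (hnc : ∀ x : X, ∃ h ∈ H, h x ≠ f x)
    (le : X → X → Prop)
    (hle : ∀ x y, le x y ↔ ∀ h ∈ H, h y ≠ f y → h x ≠ f x)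
    (x₁ x₂ : X) (hx : ∃ h ∈ H, h x₁ ≠ f x₁ ∧ h x₂ ≠ f x₂) :
    le x₁ x₂ ∨ le x₂ x₁ := by
  by_cases hxy : x₁ = x₂
  · left; rw [hle]; subst hxy; exact fun h _ hh => hh
  by_contra hc
  push_neg at hc
  obtain ⟨hn1, hn2⟩ := hc
  rw [hle] at hn1 hn2
  push_neg at hn1 hn2
  obtain ⟨h2, h2H, h2x2, h2x1⟩ := hn1
  obtain ⟨h1, h1H, h1x1, h1x2⟩ := hn2
  obtain ⟨h, hH, hx1, hx2⟩ := hx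
  apply hvc x₁ x₂ hxy
  intro g
  rcases Bool.eq_or_eq_not (g x₁) (f x₁) with g1 | g1 <;>
    rcases Bool.eq_or_eq_not (g x₂) (f x₂) with g2 | g2
  · exact ⟨f, hf, by rintro a (rfl | rfl) <;> simp [g1.symm, g2.symm]⟩
  · refine ⟨h2, h2H, ?_⟩
    rintro a (rfl | rfl)
    · rw [g1, h2x1]
    · rw [g2]; exact Bool.eq_not_iff.mpr h2x2
  · refine ⟨h1, h1H, ?_⟩
    rintro a (rfl | rfl)
    · rw [g1]; exact Bool.eq_not_iff.mpr h1x1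
    · rw [g2, h1x2]
  · refine ⟨h, hH, ?_⟩
    rintro a (rfl | rfl)
    · rw [g1]; exact Bool.eq_not_iff.mpr hx1
    · rw [g2]; exact Bool.eq_not_iff.mpr hx2
end
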